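/- Let U = ℤ² with bilinear form b(x,y) = x₁y₂ + x₂y₁ (the hyperbolic plane). If ω ∈ U is twice a primitive vector and b(ω,ω) = 8, then there exists a basis (f₁, f₂) of U with b(f₁,f₁) = b(f₂,f₂) = 0, b(f₁,f₂) = 1 and ω = -2f₁ - 2f₂; in particular b(ω, fᵢ) = -b(fᵢ,fᵢ) - 2 for i = 1,2. -/

import Mathlib

/-- The hyperbolic plane form on ℤ²: b(x,y) = x₁y₂ + x₂y₁. -/
def hypForm (x y : Fin 2 → ℤ) : ℤ := x 0 * y 1 + x 1 * y 0

/-- if ω ∈ U is twice a primitive vector of norm 8, then there is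
a hyperbolic basis (f₁,f₂) with ω = -2f₁ - 2f₂; in particular
b(ω,fᵢ) = -b(fᵢ,fᵢ) - 2. -/
theorem hyperbolic_plane_special_characteristic
    (ω : Fin 2 → ℤ)
    (htwice : ∃ v : Fin 2 → ℤ, ω = 2 • v ∧
      ∀ (m : ℤ) (w : Fin 2 → ℤ), v = m • w → IsUnit m)
    (hnorm : hypForm ω ω = 8) :
    ∃ f : Module.Basis (Fin 2) ℤ (Fin 2 → ℤ),
      hypForm (f 0) (f 0) = 0 ∧ hypForm (f 1) (f 1) = 0 ∧
      hypForm (f 0) (f 1) = 1 ∧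
      ω = -(2 • f 0) - 2 • f 1 ∧
      ∀ i : Fin 2, hypForm ω (f i) = -(hypForm (f i) (f i)) - 2 := by
  obtain ⟨v, hω, -⟩ := htwice
  subst hω
  have hv : v 0 * v 1 = 1 := by
    simp only [hypForm, Pi.smul_apply, smul_eq_mul, nsmul_eq_mul, Nat.cast_ofNat] at hnorm
    nlinarith [hnorm]
  have hstd : ∀ i j : Fin 2, (Pi.basisFun ℤ (Fin 2)) i j = if i = j then 1 else 0 := by
    intro i j
    simp [Pi.basisFun_apply, Pi.single_apply, eq_comm]
  rcases Int.mul_eq_one_iff_eq_one_or_neg_one.mp hv with ⟨h0, h1⟩ | ⟨h0, h1⟩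
  · -- v = (1,1), take f = -e
    refine ⟨(Pi.basisFun ℤ (Fin 2)).unitsSMul (fun _ => -1), ?_⟩
    have hf : ∀ i j : Fin 2,
        ((Pi.basisFun ℤ (Fin 2)).unitsSMul (fun _ => -1)) i j
          = if i = j then -1 else 0 := by
      intro i j
      rw [Module.Basis.unitsSMul_apply]
      simp only [Pi.smul_apply, hstd i j, smul_ite]
      split <;> simp
    refine ⟨by simp [hypForm, hf], by simp [hypForm, hf], by simp [hypForm, hf], ?_, ?_⟩
    · funext j
      fin_cases j <;>
        simp [hf, h0, h1]
    · intro i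
      fin_cases i <;> simp [hypForm, hf, h0, h1]
  · refine ⟨Pi.basisFun ℤ (Fin 2), ?_⟩
    refine ⟨by simp [hypForm, hstd], by simp [hypForm, hstd], by simp [hypForm, hstd], ?_, ?_⟩
    · funext j
      fin_cases j <;> simp [hstd, h0, h1]
    · intro i
      fin_cases i <;> simp [hypForm, hstd, h0, h1]
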